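/- Let ρ > 0 and γ ∈ (0,1]. Define p(0,0) = (2γ²ρ + 2γ² + 3γρ² + 6γρ + 2γ)/((ρ + 1)(2γ²(ρ + 1)² + γ(2ρ³ + 9ρ² + 8ρ + 2) + 2ρ²(ρ + 1))), and with E = 2γ + 6ρ + 2γρ + 3ρ² + 2 set p(1,0) = 2ρ(ρ + 1)(γ + ρ + 1)/E · p(0,0), p(0,1) = 2ρ²(ρ + 1)/(γE) · p(0,0), p(0,2) = 2ρ(γ + 3ρ + γρ + ρ² + 1)/E · p(0,0), p(1,1) = 2ρ²(γ + ρ)(ρ + 1)/(γE) · p(0,0), p(1,2) = ρ²(2γ + 5ρ + 2γρ + 2ρ² + 2)/E · p(0,0). Then all p(m,n) are nonnegative, they sum to 1, and they satisfy the partial flexibility balance equations with k = 1; i.e., p is the stationary distribution of the symmetric partial flexibility system. -/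

import Mathlib

set_option maxHeartbeats 1000000


/-- The balance equations of the partial flexibility system with parameters `ρ`, `k`, `γ`. -/
def PartialBalance (ρ k γ : ℝ) (p : Fin 2 → Fin 3 → ℝ) : Prop :=
  (ρ + k*ρ) * p 0 0 = p 1 0 + γ * p 0 1 + p 0 2 ∧
  (ρ + k*ρ + 1) * p 1 0 = ρ * p 0 0 + γ * p 1 1 + p 1 2 ∧
  2 * p 1 2 = ρ * p 0 2 + k*ρ * p 1 0 ∧
  (ρ + 1) * p 0 2 = k*ρ * p 0 0 + p 1 2 ∧
  (1 + γ) * p 1 1 = ρ * (p 0 1 + p 1 0) ∧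
  (ρ + γ) * p 0 1 = p 1 1

/-- `p` is a stationary distribution of the partial flexibility system. -/
def PartialStationary (ρ k γ : ℝ) (p : Fin 2 → Fin 3 → ℝ) : Prop :=
  (∀ m n, 0 ≤ p m n) ∧ (∑ m : Fin 2, ∑ n : Fin 3, p m n) = 1 ∧ PartialBalance ρ k γ p

/-- Throughput of the partial flexibility system. -/
noncomputable def Tps (ρ k : ℝ) (p : Fin 2 → Fin 3 → ℝ) : ℝ :=
  ρ * (1 - p 1 1 - p 1 2) + k*ρ * (1 - p 1 1 - p 1 2 - p 0 1 - p 0 2)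

/-- the given family `p` is the stationary distribution of the symmetric
(`k = 1`) partial flexibility system. -/
theorem stmt_5 (ρ γ : ℝ) (hρ : 0 < ρ) (hγ : γ ∈ Set.Ioc (0:ℝ) 1) :
    PartialStationary ρ 1 γ
      (![![(2*γ^2*ρ + 2*γ^2 + 3*γ*ρ^2 + 6*γ*ρ + 2*γ) /
            ((ρ + 1)*(2*γ^2*(ρ + 1)^2 + γ*(2*ρ^3 + 9*ρ^2 + 8*ρ + 2) + 2*ρ^2*(ρ + 1))),
          2*ρ^2*(ρ + 1)/(γ*(2*γ + 6*ρ + 2*γ*ρ + 3*ρ^2 + 2)) *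
            ((2*γ^2*ρ + 2*γ^2 + 3*γ*ρ^2 + 6*γ*ρ + 2*γ) /
              ((ρ + 1)*(2*γ^2*(ρ + 1)^2 + γ*(2*ρ^3 + 9*ρ^2 + 8*ρ + 2) + 2*ρ^2*(ρ + 1)))),
          2*ρ*(γ + 3*ρ + γ*ρ + ρ^2 + 1)/(2*γ + 6*ρ + 2*γ*ρ + 3*ρ^2 + 2) *
            ((2*γ^2*ρ + 2*γ^2 + 3*γ*ρ^2 + 6*γ*ρ + 2*γ) /
              ((ρ + 1)*(2*γ^2*(ρ + 1)^2 + γ*(2*ρ^3 + 9*ρ^2 + 8*ρ + 2) + 2*ρ^2*(ρ + 1))))],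
        ![2*ρ*(ρ + 1)*(γ + ρ + 1)/(2*γ + 6*ρ + 2*γ*ρ + 3*ρ^2 + 2) *
            ((2*γ^2*ρ + 2*γ^2 + 3*γ*ρ^2 + 6*γ*ρ + 2*γ) /
              ((ρ + 1)*(2*γ^2*(ρ + 1)^2 + γ*(2*ρ^3 + 9*ρ^2 + 8*ρ + 2) + 2*ρ^2*(ρ + 1)))),
          2*ρ^2*(γ + ρ)*(ρ + 1)/(γ*(2*γ + 6*ρ + 2*γ*ρ + 3*ρ^2 + 2)) *
            ((2*γ^2*ρ + 2*γ^2 + 3*γ*ρ^2 + 6*γ*ρ + 2*γ) /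
              ((ρ + 1)*(2*γ^2*(ρ + 1)^2 + γ*(2*ρ^3 + 9*ρ^2 + 8*ρ + 2) + 2*ρ^2*(ρ + 1)))),
          ρ^2*(2*γ + 5*ρ + 2*γ*ρ + 2*ρ^2 + 2)/(2*γ + 6*ρ + 2*γ*ρ + 3*ρ^2 + 2) *
            ((2*γ^2*ρ + 2*γ^2 + 3*γ*ρ^2 + 6*γ*ρ + 2*γ) /
              ((ρ + 1)*(2*γ^2*(ρ + 1)^2 + γ*(2*ρ^3 + 9*ρ^2 + 8*ρ + 2) + 2*ρ^2*(ρ + 1))))]]) := by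
  obtain ⟨hγ0, hγ1⟩ := hγ
  have hρ1 : (0:ℝ) < ρ + 1 := by linarith
  have hE : (0:ℝ) < 2*γ + 6*ρ + 2*γ*ρ + 3*ρ^2 + 2 := by positivity
  have hD : (0:ℝ) < 2*γ^2*(ρ + 1)^2 + γ*(2*ρ^3 + 9*ρ^2 + 8*ρ + 2) + 2*ρ^2*(ρ + 1) := by
    positivity
  have hγ' := hγ0.ne'
  have hρ1' := hρ1.ne'
  have hE' := hE.ne'
  have hD' := hD.ne'
  refine ⟨?_, ?_, ?_, ?_, ?_, ?_, ?_, ?_⟩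
  · intro m n
    fin_cases m <;> fin_cases n <;>
      simp only [Matrix.cons_val', Matrix.cons_val_zero, Matrix.cons_val_one,
        Matrix.head_cons, Matrix.head_fin_const, Matrix.empty_val',
        Matrix.cons_val_fin_one, Fin.isValue, Fin.mk_one, Fin.mk_zero, Nat.succ_eq_add_one, Nat.reduceAdd, Fin.reduceFinMk,
        Matrix.cons_val_two, Matrix.tail_cons] <;> positivity
  all_goals
    simp only [Fin.sum_univ_succ, Fin.sum_univ_zero, Matrix.cons_val', Matrix.cons_val_zero,
      Matrix.cons_val_one, Matrix.head_cons, Matrix.empty_val', Matrix.cons_val_fin_one,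
      Fin.isValue, Matrix.cons_val_two, Matrix.tail_cons, add_zero, Matrix.cons_val_succ]
  all_goals field_simp
  all_goals ring
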